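/- Let α ∈ ℓ¹ with ‖α‖₁ = 1 and α(n) > 0 for every n. If W_α contains a subspace isometric to W_β for some β ∈ ℓ¹ with ‖β‖₁ = 1, then the set {n : β(n) < 0} is finite and the set {n : β(n) = 0} is empty. -/

import Mathlib

open Filter Topology

noncomputable section

/-- `x` belongs to the hyperplane `W_α` of the space `c` of convergent real sequences:
`x` converges and its limit equals `∑' i, α i * x i` (sequences are 0-indexed). -/
def MemW (α x : ℕ → ℝ) : Prop :=
  (∃ l : ℝ, Tendsto x atTop (𝓝 l)) ∧ Tendsto x atTop (𝓝 (∑' i, α i * x i))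

/-- The sup norm of a real sequence. -/
def supNorm (x : ℕ → ℝ) : ℝ := ⨆ i, |x i|

/-- The element `r·e₁* = (r,0,0,…)` of `ℓ¹`. -/
def rSeq (r : ℝ) : ℕ → ℝ := fun i => if i = 0 then r else 0

private lemma abs_max_aux (a c : ℝ) : |a| + |c| ≤ max |a + c| |a - c| := by
  rcases le_total 0 a with ha | ha <;> rcases le_total 0 c with hc | hc
  · refine le_max_of_le_left ?_
    rw [abs_of_nonneg ha, abs_of_nonneg hc, abs_of_nonneg (by linarith : (0:ℝ) ≤ a + c)]
  · refine le_max_of_le_right ?_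
    rw [abs_of_nonneg ha, abs_of_nonpos hc, abs_of_nonneg (by linarith : (0:ℝ) ≤ a - c)]
    ring_nf
    exact le_rfl
  · refine le_max_of_le_right ?_
    rw [abs_of_nonpos ha, abs_of_nonneg hc, abs_of_nonpos (by linarith : a - c ≤ 0)]
    ring_nf
    exact le_rfl
  · refine le_max_of_le_left ?_
    rw [abs_of_nonpos ha, abs_of_nonpos hc, abs_of_nonpos (by linarith : a + c ≤ 0)]
    ring_nf
    exact le_rfl

private lemma mul_sign_eq_abs (a : ℝ) : a * Real.sign a = |a| := by
  rcases lt_trichotomy a 0 with h | h | h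
  · rw [Real.sign_of_neg h, abs_of_neg h]; ring
  · simp [h]
  · rw [Real.sign_of_pos h, abs_of_pos h]; ring

private lemma abs_sign_le (a : ℝ) : |Real.sign a| ≤ 1 := by
  rcases lt_trichotomy a 0 with h | h | h
  · rw [Real.sign_of_neg h]; norm_num
  · simp [h]
  · rw [Real.sign_of_pos h]; norm_num

private lemma bdd_of_tendsto {x : ℕ → ℝ} {l : ℝ} (h : Tendsto x atTop (𝓝 l)) :
    ∃ C : ℝ, 0 ≤ C ∧ ∀ i, |x i| ≤ C := by
  have h' : Tendsto (fun i => |x i|) atTop (𝓝 |l|) := h.abs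
  obtain ⟨N, hN⟩ := (Metric.tendsto_atTop.1 h') 1 one_pos
  have hsum : (0:ℝ) ≤ ∑ i ∈ Finset.range N, |x i| :=
    Finset.sum_nonneg fun _ _ => abs_nonneg _
  refine ⟨(∑ i ∈ Finset.range N, |x i|) + |l| + 1, by positivity, fun i => ?_⟩
  rcases lt_or_ge i N with hi | hi
  · have h1 : |x i| ≤ ∑ j ∈ Finset.range N, |x j| :=
      Finset.single_le_sum (f := fun j => |x j|) (fun _ _ => abs_nonneg _) (Finset.mem_range.2 hi)
    have := abs_nonneg l
    linarith
  · have h2 := hN i hi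
    rw [Real.dist_eq] at h2
    have h3 : |x i| - |l| ≤ abs (|x i| - |l|) := le_abs_self _
    linarith

private lemma memw_summable {β x : ℕ → ℝ} (hβ : Summable fun i => |β i|) (hx : MemW β x) :
    Summable fun i => β i * x i := by
  obtain ⟨l, hl⟩ := hx.1
  obtain ⟨C, hC0, hC⟩ := bdd_of_tendsto hl
  have : Summable fun i => |β i| * C := hβ.mul_right C
  refine Summable.of_abs (Summable.of_nonneg_of_le (fun i => abs_nonneg _) (fun i => ?_) this)
  rw [abs_mul]
  exact mul_le_mul_of_nonneg_left (hC i) (abs_nonneg _)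

private lemma memw_add {β x y : ℕ → ℝ} (hβ : Summable fun i => |β i|)
    (hx : MemW β x) (hy : MemW β y) : MemW β (x + y) := by
  have hsx := memw_summable hβ hx
  have hsy := memw_summable hβ hy
  have ht : Tendsto (x + y) atTop (𝓝 ((∑' i, β i * x i) + ∑' i, β i * y i)) := hx.2.add hy.2
  have heq : (∑' i, β i * (x + y) i) = (∑' i, β i * x i) + ∑' i, β i * y i := by
    rw [← Summable.tsum_add hsx hsy]
    exact tsum_congr fun i => by simp [mul_add]
  exact ⟨⟨_, ht⟩, by rw [heq]; exact ht⟩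

private lemma memw_smul {β x : ℕ → ℝ} (hβ : Summable fun i => |β i|)
    (a : ℝ) (hx : MemW β x) : MemW β (a • x) := by
  have hsx := memw_summable hβ hx
  have ht : Tendsto (a • x) atTop (𝓝 (a * ∑' i, β i * x i)) := by
    have := hx.2.const_mul a
    refine this.congr fun i => ?_
    simp [Pi.smul_apply, smul_eq_mul]
    try ring
  have heq : (∑' i, β i * (a • x) i) = a * ∑' i, β i * x i := by
    rw [← tsum_mul_left]
    exact tsum_congr fun i => by simp [Pi.smul_apply, smul_eq_mul]; try ring
  exact ⟨⟨_, ht⟩, by rw [heq]; exact ht⟩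

private lemma supNorm_le {x : ℕ → ℝ} {c : ℝ} (hc : 0 ≤ c) (h : ∀ i, |x i| ≤ c) :
    supNorm x ≤ c := ciSup_le h

private lemma le_supNorm {x : ℕ → ℝ} {C : ℝ} (hC : ∀ i, |x i| ≤ C) (i : ℕ) :
    |x i| ≤ supNorm x :=
  le_ciSup ⟨C, fun y hy => by obtain ⟨j, rfl⟩ := hy; exact hC j⟩ i


private lemma peak_vec {β : ℕ → ℝ} (hβ : Summable fun i => |β i|) (hβ1 : ∑' i, |β i| = 1)
    (n : ℕ) (hn : |β n| ≤ 1/4) :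
    ∃ x : ℕ → ℝ, MemW β x ∧ x n = 1 ∧ (∀ i, i ≠ n → |x i| ≤ 2 * |β n|) ∧
      (∀ i, |x i| ≤ 1) ∧ supNorm x = 1 := by
  -- choose M with partial sum ≥ 7/8 and n < M
  have hps : Tendsto (fun M => ∑ i ∈ Finset.range M, |β i|) atTop (𝓝 1) := by
    rw [← hβ1]; exact hβ.hasSum.tendsto_sum_nat
  obtain ⟨M₀, hM₀⟩ := (Metric.tendsto_atTop.1 hps) (1/8) (by norm_num)
  set M := max M₀ (n+1) with hMdef
  have hnM : n < M := lt_of_lt_of_le (Nat.lt_succ_self n) (le_max_right _ _)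
  have hMsum : (7:ℝ)/8 ≤ ∑ i ∈ Finset.range M, |β i| := by
    have := hM₀ M (le_max_left _ _)
    rw [Real.dist_eq] at this
    have h2 : |(∑ i ∈ Finset.range M, |β i|) - 1| < 1/8 := this
    have := abs_lt.1 h2
    linarith [this.1]
  set A := (Finset.range M).erase n with hAdef
  set S := ∑ i ∈ A, |β i| with hSdef
  have hSA : S = (∑ i ∈ Finset.range M, |β i|) - |β n| := by
    rw [hSdef, hAdef, Finset.sum_erase_eq_sub (Finset.mem_range.2 hnM)]
  have hS2 : (1:ℝ)/2 ≤ S := by rw [hSA]; linarith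
  have hS0 : (0:ℝ) < S := by linarith
  set x : ℕ → ℝ := fun i => if i = n then 1 else if i ∈ A then -β n * Real.sign (β i) / S else 0
    with hxdef
  have hxn : x n = 1 := by simp [hxdef]
  have hxoff : ∀ i, i ≠ n → |x i| ≤ 2 * |β n| := by
    intro i hi
    rw [hxdef]
    simp only [hi, if_false]
    by_cases hiA : i ∈ A
    · simp only [hiA, if_true]
      rw [abs_div, abs_mul, abs_neg, abs_of_pos hS0]
      have h1 : |β n| * |Real.sign (β i)| ≤ |β n| * 1 :=
        mul_le_mul_of_nonneg_left (abs_sign_le _) (abs_nonneg _)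
      have h2 : |β n| * |Real.sign (β i)| / S ≤ |β n| / S :=
        (div_le_div_iff_of_pos_right hS0).2 (by linarith)
      have h3 : |β n| / S ≤ |β n| / (1/2) :=
        div_le_div_of_nonneg_left (abs_nonneg _) (by norm_num) hS2
      calc |β n| * |Real.sign (β i)| / S ≤ |β n| / S := h2
        _ ≤ |β n| / (1/2) := h3
        _ = 2 * |β n| := by ring
    · simp only [hiA, if_false, abs_zero]
      positivity
  have hxle : ∀ i, |x i| ≤ 1 := by
    intro i
    by_cases hi : i = n
    · rw [hi, hxn]; norm_num
    · have := hxoff i hi; linarith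
  have hx0 : ∀ i, M ≤ i → x i = 0 := by
    intro i hi
    have h1 : i ≠ n := by omega
    have h2 : i ∉ A := by
      rw [hAdef]
      intro hmem
      have := Finset.mem_range.1 (Finset.mem_of_mem_erase hmem)
      omega
    simp [hxdef, h1, h2]
  have htend : Tendsto x atTop (𝓝 0) := by
    refine Tendsto.congr' ?_ tendsto_const_nhds
    filter_upwards [eventually_ge_atTop M] with i hi
    exact (hx0 i hi).symm
  have htsum : (∑' i, β i * x i) = 0 := by
    rw [tsum_eq_sum (s := Finset.range M) (fun i hi => by
      rw [hx0 i (by simpa using hi)]; ring)]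
    rw [← Finset.add_sum_erase _ _ (Finset.mem_range.2 hnM)]
    rw [hxn]
    have hterm : ∀ i ∈ A, β i * x i = (-β n / S) * |β i| := by
      intro i hi
      have hine : i ≠ n := Finset.ne_of_mem_erase hi
      rw [hxdef]
      simp only [hine, if_false, hi, if_true]
      rw [← mul_sign_eq_abs (β i)]
      ring
    rw [Finset.sum_congr rfl hterm, ← Finset.mul_sum, ← hSdef]
    field_simp
    ring
  refine ⟨x, ⟨⟨0, htend⟩, by rw [htsum]; exact htend⟩, hxn, hxoff, hxle, ?_⟩
  have h1 : supNorm x ≤ 1 := supNorm_le zero_le_one hxle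
  have h2 : (1:ℝ) ≤ supNorm x := by
    have := le_supNorm hxle n
    rw [hxn] at this
    simpa using this
  linarith

private lemma norming {β : ℕ → ℝ} (hβ : Summable fun i => |β i|) (hβ1 : ∑' i, |β i| = 1)
    (M : ℕ) (hM : (∑' i, |β (i + (M+1))|) ≤ 1/2) :
    ∃ y : ℕ → ℝ, MemW β y ∧ (∀ i, |y i| ≤ 1) ∧ (∀ i, i ≤ M → y i = Real.sign (β i)) ∧
      1 - 2 * (∑' i, |β (i + (M+1))|) ≤ ∑' i, β i * y i := by
  set τ := ∑' i, |β (i + (M+1))| with hτdef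
  have hβsh : Summable fun i => |β (i + (M+1))| := (summable_nat_add_iff (f := fun i => |β i|) (M+1)).2 hβ
  have hβsh' : Summable fun i => β (i + (M+1)) := by
    refine Summable.of_abs ?_
    exact hβsh
  have hτ0 : 0 ≤ τ := tsum_nonneg fun i => abs_nonneg _
  set S := ∑ i ∈ Finset.range (M+1), |β i| with hSdef
  have hSτ : S + τ = 1 := by
    rw [hSdef, hτdef, Summable.sum_add_tsum_nat_add (M+1) hβ]
    exact hβ1
  set r := ∑' i, β (i + (M+1)) with hrdef
  have hr : |r| ≤ τ := by
    rw [hrdef, hτdef]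
    have : ‖∑' i, β (i + (M+1))‖ ≤ ∑' i, ‖β (i + (M+1))‖ :=
      norm_tsum_le_tsum_norm (by simpa only [Real.norm_eq_abs] using hβsh)
    simpa only [Real.norm_eq_abs] using this
  have hS0 : 0 ≤ S := Finset.sum_nonneg fun _ _ => abs_nonneg _
  have h1r : S ≤ 1 - r := by
    have := abs_le.1 hr
    linarith
  have h1rpos : 0 < 1 - r := by
    have := abs_le.1 hr
    linarith
  set t := S / (1 - r) with htdef
  have ht0 : 0 ≤ t := div_nonneg hS0 (le_of_lt h1rpos)
  have ht1 : t ≤ 1 := by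
    rw [htdef, div_le_one h1rpos]; exact h1r
  have htlb : 1 - 2*τ ≤ t := by
    have h2 : (1-τ)/(1+τ) ≤ t := by
      rw [htdef]
      exact div_le_div₀ hS0 (by linarith) h1rpos (by linarith [abs_le.1 hr])
    have h3 : 1 - 2*τ ≤ (1-τ)/(1+τ) := by
      rw [le_div_iff₀ (by linarith)]
      nlinarith [sq_nonneg τ]
    linarith
  set y : ℕ → ℝ := fun i => if i ≤ M then Real.sign (β i) else t with hydef
  have hyle : ∀ i, |y i| ≤ 1 := by
    intro i
    rw [hydef]
    by_cases hi : i ≤ M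
    · simp only [hi, if_true]; exact abs_sign_le _
    · simp only [hi, if_false]
      rw [abs_of_nonneg ht0]; exact ht1
  have hyM : ∀ i, i ≤ M → y i = Real.sign (β i) := fun i hi => by simp [hydef, hi]
  have htend : Tendsto y atTop (𝓝 t) := by
    refine Tendsto.congr' ?_ tendsto_const_nhds
    filter_upwards [eventually_ge_atTop (M+1)] with i hi
    have : ¬ (i ≤ M) := by omega
    simp [hydef, this]
  have hsumy : Summable fun i => β i * y i := by
    have : Summable fun i => |β i| * 1 := hβ.mul_right 1
    refine Summable.of_abs (Summable.of_nonneg_of_le (fun i => abs_nonneg _) (fun i => ?_) this)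
    rw [abs_mul]
    exact mul_le_mul_of_nonneg_left (hyle i) (abs_nonneg _)
  have htsum : (∑' i, β i * y i) = t := by
    rw [← Summable.sum_add_tsum_nat_add (M+1) hsumy]
    have h1 : ∑ i ∈ Finset.range (M+1), β i * y i = S := by
      rw [hSdef]
      refine Finset.sum_congr rfl fun i hi => ?_
      have hiM : i ≤ M := Nat.lt_succ_iff.1 (Finset.mem_range.1 hi)
      rw [hyM i hiM, mul_sign_eq_abs]
    have h2 : (∑' i, β (i + (M+1)) * y (i + (M+1))) = r * t := by
      have : ∀ i : ℕ, β (i + (M+1)) * y (i + (M+1)) = β (i + (M+1)) * t := by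
        intro i
        have : ¬ (i + (M+1) ≤ M) := by omega
        simp [hydef, this]
      rw [tsum_congr this, tsum_mul_right]
    rw [h1, h2]
    have : S = t * (1 - r) := by
      rw [htdef, div_mul_cancel₀]
      exact ne_of_gt h1rpos
    rw [this]; ring
  refine ⟨y, ⟨⟨t, htend⟩, by rw [htsum]; exact htend⟩, hyle, hyM, by rw [htsum]; exact htlb⟩

private lemma certificate {α β : ℕ → ℝ} {T : (ℕ → ℝ) → (ℕ → ℝ)}
    (hβ : Summable fun i => |β i|) (hβ1 : ∑' i, |β i| = 1)
    (hT1 : ∀ x, MemW β x → MemW α (T x) ∧ supNorm (T x) = supNorm x)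
    (hT2 : ∀ x y, MemW β x → MemW β y → T (x + y) = T x + T y)
    (hT3 : ∀ (a : ℝ) (x : ℕ → ℝ), MemW β x → T (a • x) = a • T x)
    (n : ℕ) (hn : |β n| ≤ 1/4) {ε : ℝ} (hε : 0 < ε) :
    ∃ (m : ℕ) (s : ℝ), (s = 1 ∨ s = -1) ∧
      ∀ y, MemW β y → (∀ i, |y i| ≤ 1) → |T y m - s * y n| ≤ 4 * |β n| + 3 * ε := by
  obtain ⟨x, hxmem, hxn, hxoff, hxle, hxnorm⟩ := peak_vec hβ hβ1 n hn
  obtain ⟨hTxmem, hTxnorm⟩ := hT1 x hxmem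
  set u := T x with hudef
  have hunorm : supNorm u = 1 := by rw [hTxnorm, hxnorm]
  obtain ⟨lu, hlu⟩ := hTxmem.1
  obtain ⟨Cu, hCu0, hCu⟩ := bdd_of_tendsto hlu
  have h1 : (1:ℝ) - ε < ⨆ i, |u i| := by
    have : supNorm u = ⨆ i, |u i| := rfl
    rw [← this, hunorm]; linarith
  obtain ⟨m, hm⟩ := exists_lt_of_lt_ciSup h1
  have hum1 : |u m| ≤ 1 := by rw [← hunorm]; exact le_supNorm hCu m
  set s : ℝ := if 0 ≤ u m then 1 else -1 with hsdef
  have hs : s = 1 ∨ s = -1 := by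
    by_cases h : 0 ≤ u m
    · left; simp [hsdef, h]
    · right; simp [hsdef, h]
  have hus : |u m - s| ≤ ε := by
    by_cases h : 0 ≤ u m
    · have h2 : |u m| = u m := abs_of_nonneg h
      have hsv : s = 1 := by simp [hsdef, h]
      rw [hsv, abs_le]
      constructor <;> linarith
    · push_neg at h
      have h2 : |u m| = -u m := abs_of_neg h
      have hsv : s = -1 := by simp [hsdef, h]
      rw [hsv, abs_le]
      constructor <;> linarith
  refine ⟨m, s, hs, ?_⟩
  intro y hy hyle
  set η := 2 * |β n| with hηdef
  have hη0 : 0 ≤ η := by positivity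
  have hη1 : η ≤ 1/2 := by rw [hηdef]; linarith
  set z := y + (-(y n)) • x with hzdef
  have hzmem : MemW β z := memw_add hβ hy (memw_smul hβ _ hxmem)
  have hzn : z n = 0 := by
    simp only [hzdef, Pi.add_apply, Pi.smul_apply, smul_eq_mul, hxn]
    ring
  have hyn1 : |y n| ≤ 1 := hyle n
  have hzle : ∀ i, |z i| ≤ 1 + η := by
    intro i
    by_cases hi : i = n
    · rw [hi, hzn]; simp; linarith
    · have h3 : |z i| ≤ |y i| + |y n| * |x i| := by
        simp only [hzdef, Pi.add_apply, Pi.smul_apply, smul_eq_mul]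
        calc |y i + -y n * x i| ≤ |y i| + |(-y n) * x i| := abs_add_le _ _
          _ = |y i| + |y n| * |x i| := by rw [abs_mul, abs_neg]
      have h4 : |y n| * |x i| ≤ 1 * η := by
        apply mul_le_mul hyn1 (hxoff i hi) (abs_nonneg _) zero_le_one
      have := hyle i
      linarith
  have h1η : (0:ℝ) < 1 + η := by linarith
  set c := (1 + η)⁻¹ with hcdef
  have hc0 : 0 < c := inv_pos.2 h1η
  -- bound |T z m|
  have hTz : ∀ σ : ℝ, σ = 1 ∨ σ = -1 → |u m + σ * c * T z m| ≤ 1 + η := by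
    intro σ hσ
    set w := x + (σ * c) • z with hwdef
    have hwmem : MemW β w := memw_add hβ hxmem (memw_smul hβ _ hzmem)
    have hwle : ∀ i, |w i| ≤ 1 + η := by
      intro i
      by_cases hi : i = n
      · rw [hwdef, hi]
        simp only [Pi.add_apply, Pi.smul_apply, smul_eq_mul, hzn, hxn]
        simp
        linarith
      · have hσ1 : |σ| = 1 := by rcases hσ with h | h <;> simp [h]
        have : |w i| ≤ |x i| + |σ| * c * |z i| := by
          rw [hwdef]
          simp only [Pi.add_apply, Pi.smul_apply, smul_eq_mul]
          calc |x i + σ * c * z i| ≤ |x i| + |σ * c * z i| := abs_add_le _ _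
            _ = |x i| + |σ| * c * |z i| := by
                rw [abs_mul, abs_mul, abs_of_pos hc0]
        have h5 : |σ| * c * |z i| ≤ 1 * c * (1 + η) := by
          apply mul_le_mul ?_ (hzle i) (abs_nonneg _) (by positivity)
          rw [hσ1]
        have h6 : (1:ℝ) * c * (1 + η) = 1 := by
          rw [hcdef]; field_simp
        have := hxoff i hi
        have : |x i| ≤ η := by rw [hηdef]; exact hxoff i hi
        linarith
    obtain ⟨hTwmem, hTwnorm⟩ := hT1 w hwmem
    obtain ⟨lw, hlw⟩ := hTwmem.1
    obtain ⟨Cw, _, hCw⟩ := bdd_of_tendsto hlw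
    have h7 : |T w m| ≤ supNorm (T w) := le_supNorm hCw m
    have h8 : supNorm (T w) ≤ 1 + η := by
      rw [hTwnorm]
      exact supNorm_le (by linarith) hwle
    have h9 : T w = T x + (σ * c) • T z := by
      rw [hwdef, hT2 x ((σ * c) • z) hxmem (memw_smul hβ _ hzmem), hT3 _ z hzmem]
    have h10 : T w m = u m + σ * c * T z m := by
      rw [h9]
      simp [Pi.add_apply, Pi.smul_apply, smul_eq_mul, hudef]
    rw [← h10]
    linarith
  have hTzm : |T z m| ≤ 2 * η + 2 * ε := by
    have hp := hTz 1 (Or.inl rfl)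
    have hq := hTz (-1) (Or.inr rfl)
    have h11 : |u m| + |c * T z m| ≤ max |u m + c * T z m| |u m - c * T z m| :=
      abs_max_aux _ _
    have h12 : |u m + c * T z m| ≤ 1 + η := by
      have := hp; rw [one_mul] at this; exact this
    have h13 : |u m - c * T z m| ≤ 1 + η := by
      have := hq
      rw [neg_one_mul, neg_mul] at this
      rw [sub_eq_add_neg]
      exact this
    have h14 : |c * T z m| ≤ (1 + η) - |u m| := by
      rcases max_cases |u m + c * T z m| |u m - c * T z m| with ⟨hm1, _⟩ | ⟨hm1, _⟩ <;> linarith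
    have h15 : |u m| ≥ 1 - ε := le_of_lt hm
    have h16 : |c * T z m| = c * |T z m| := by rw [abs_mul, abs_of_pos hc0]
    have h17 : c * |T z m| ≤ η + ε := by rw [← h16]; linarith
    have h18 : |T z m| ≤ (1 + η) * (η + ε) := by
      have := mul_le_mul_of_nonneg_left h17 (le_of_lt h1η)
      rw [← mul_assoc] at this
      have h19 : (1 + η) * c = 1 := by rw [hcdef]; field_simp
      rw [h19, one_mul] at this
      exact this
    nlinarith
  have hTzy : T z m = T y m - y n * u m := by
    have h20 : T z = T y + (-(y n)) • T x := by
      rw [hzdef, hT2 y ((-(y n)) • x) hy (memw_smul hβ _ hxmem), hT3 _ x hxmem]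
    rw [h20]
    simp [Pi.add_apply, Pi.smul_apply, smul_eq_mul, hudef]
    ring
  have hfinal : |T y m - s * y n| ≤ |T z m| + |y n| * |u m - s| := by
    have : T y m - s * y n = T z m + y n * (u m - s) := by rw [hTzy]; ring
    rw [this]
    calc |T z m + y n * (u m - s)| ≤ |T z m| + |y n * (u m - s)| := abs_add_le _ _
      _ = |T z m| + |y n| * |u m - s| := by rw [abs_mul]
  have h21 : |y n| * |u m - s| ≤ 1 * ε := by
    apply mul_le_mul hyn1 hus (abs_nonneg _) zero_le_one
  have h22 : (2:ℝ) * η = 4 * |β n| := by rw [hηdef]; ring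
  linarith

private lemma cert_ne {β : ℕ → ℝ} {T : (ℕ → ℝ) → (ℕ → ℝ)}
    (hβ : Summable fun i => |β i|) (hβ1 : ∑' i, |β i| = 1)
    {n n' : ℕ} (hne : n' ≠ n) (hn : |β n| ≤ 1/4)
    {m : ℕ} {s s' e e' : ℝ} (hs : s = 1 ∨ s = -1) (hs' : s' = 1 ∨ s' = -1)
    (h1 : ∀ y, MemW β y → (∀ i, |y i| ≤ 1) → |T y m - s * y n| ≤ e)
    (h2 : ∀ y, MemW β y → (∀ i, |y i| ≤ 1) → |T y m - s' * y n'| ≤ e')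
    (hee : e + e' + 2 * |β n| < 1) : False := by
  obtain ⟨x, hxmem, hxn, hxoff, hxle, -⟩ := peak_vec hβ hβ1 n hn
  have ha := h1 x hxmem hxle
  have hb := h2 x hxmem hxle
  rw [hxn, mul_one] at ha
  have hs1 : |s| = 1 := by rcases hs with h | h <;> simp [h]
  have hs'1 : |s'| = 1 := by rcases hs' with h | h <;> simp [h]
  have hxn' : |x n'| ≤ 2 * |β n| := hxoff n' hne
  have h3 : |s' * x n'| ≤ 2 * |β n| := by
    rw [abs_mul, hs'1, one_mul]; exact hxn'
  have h4 : |s| ≤ |s - T x m| + |T x m - s' * x n'| + |s' * x n'| := by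
    have : s = (s - T x m) + (T x m - s' * x n') + (s' * x n') := by ring
    calc |s| = |(s - T x m) + (T x m - s' * x n') + (s' * x n')| := by rw [← this]
      _ ≤ |(s - T x m) + (T x m - s' * x n')| + |s' * x n'| := abs_add_le _ _
      _ ≤ |s - T x m| + |T x m - s' * x n'| + |s' * x n'| := by
          have := abs_add_le (s - T x m) (T x m - s' * x n')
          linarith
  rw [abs_sub_comm s (T x m)] at h4
  rw [hs1] at h4
  linarith

private lemma coord_lb {α β : ℕ → ℝ} {T : (ℕ → ℝ) → (ℕ → ℝ)}
    (hα : Summable fun i => |α i|) (hα1 : ∑' i, |α i| = 1) (hαpos : ∀ n, 0 < α n)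
    (hT1 : ∀ x, MemW β x → MemW α (T x) ∧ supNorm (T x) = supNorm x)
    {y : ℕ → ℝ} (hy : MemW β y) (hyle : ∀ i, |y i| ≤ 1) (m₀ : ℕ) :
    (∑' i, α i * T y i) ≤ α m₀ * T y m₀ + (1 - α m₀) := by
  obtain ⟨hTymem, hTynorm⟩ := hT1 y hy
  obtain ⟨lT, hlT⟩ := hTymem.1
  obtain ⟨C, hC0, hC⟩ := bdd_of_tendsto hlT
  have hTyle : ∀ i, |T y i| ≤ 1 := by
    intro i
    calc |T y i| ≤ supNorm (T y) := le_supNorm hC i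
      _ = supNorm y := hTynorm
      _ ≤ 1 := supNorm_le zero_le_one hyle
  have hαeq : (fun i => α i) = fun i => |α i| := funext fun i => (abs_of_pos (hαpos i)).symm
  have hαsum : Summable fun i => α i := by rw [hαeq]; exact hα
  have hαts : (∑' i, α i) = 1 := by rw [hαeq]; exact hα1
  set δ : ℕ → ℝ := fun i => if i = m₀ then α i * T y i - α i else 0 with hδdef
  have hδsum : Summable δ := by
    apply summable_of_ne_finset_zero (s := {m₀})
    intro i hi
    have : i ≠ m₀ := by simpa using hi
    simp [hδdef, this]
  have hδts : (∑' i, δ i) = α m₀ * T y m₀ - α m₀ := by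
    rw [tsum_eq_sum (s := {m₀}) (fun i hi => by
      have : i ≠ m₀ := by simpa using hi
      simp [hδdef, this])]
    simp [hδdef]
  have hheq : (fun i => if i = m₀ then α i * T y i else α i) = fun i => α i + δ i := by
    funext i
    by_cases hi : i = m₀ <;> simp [hδdef, hi]
  have hhsum : Summable fun i => if i = m₀ then α i * T y i else α i := by
    rw [hheq]; exact hαsum.add hδsum
  have hhts : (∑' i, if i = m₀ then α i * T y i else α i) = 1 + (α m₀ * T y m₀ - α m₀) := by
    rw [hheq, Summable.tsum_add hαsum hδsum, hαts, hδts]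
  have hsumTy : Summable fun i => α i * T y i := by
    have hb : Summable fun i => |α i| * 1 := hα.mul_right 1
    refine Summable.of_abs (Summable.of_nonneg_of_le (fun i => abs_nonneg _) (fun i => ?_) hb)
    rw [abs_mul]
    exact mul_le_mul_of_nonneg_left (hTyle i) (abs_nonneg _)
  have hle : (∑' i, α i * T y i) ≤ ∑' i, if i = m₀ then α i * T y i else α i := by
    apply hsumTy.tsum_le_tsum ?_ hhsum
    intro i
    by_cases hi : i = m₀
    · simp [hi]
    · simp only [hi, if_false]
      apply mul_le_of_le_one_right (le_of_lt (hαpos i))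
      have := hTyle i
      exact le_trans (le_abs_self _) this
  rw [hhts] at hle
  linarith

private lemma exists_large {m : ℕ → ℕ} (hinj : Function.Injective m)
    {S : Set ℕ} (hS : S.Infinite) (M₀ J : ℕ) :
    ∃ j, j ∈ S ∧ J ≤ j ∧ M₀ ≤ m j := by
  have hfin : {j | m j < M₀}.Finite := by
    have heq : {j | m j < M₀} = m ⁻¹' (Set.Iio M₀) := rfl
    rw [heq]
    exact Set.Finite.preimage hinj.injOn (Set.finite_Iio M₀)
  have hfin2 : ({j | m j < M₀} ∪ Set.Iio J).Finite := hfin.union (Set.finite_Iio J)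
  have hinf : (S \ ({j | m j < M₀} ∪ Set.Iio J)).Infinite := hS.diff hfin2
  obtain ⟨j, hjS, hj2⟩ := hinf.nonempty
  rw [Set.mem_union, not_or] at hj2
  refine ⟨j, hjS, ?_, ?_⟩
  · have := hj2.2; simpa [Set.mem_Iio] using this
  · have := hj2.1; simpa using this

private lemma limit_ident {α β : ℕ → ℝ} {T : (ℕ → ℝ) → (ℕ → ℝ)}
    (hT1 : ∀ x, MemW β x → MemW α (T x) ∧ supNorm (T x) = supNorm x)
    {ϑ : ℝ} (hϑ : |ϑ| ≤ 1) (n m : ℕ → ℕ) (e : ℕ → ℝ)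
    (hcert : ∀ j, ∀ y, MemW β y → (∀ i, |y i| ≤ 1) → |T y (m j) - ϑ * y (n j)| ≤ e j)
    (he : Tendsto e atTop (𝓝 0))
    (hn : Tendsto n atTop atTop)
    (hm : ∀ M₀ J : ℕ, ∃ j, J ≤ j ∧ M₀ ≤ m j)
    {y : ℕ → ℝ} (hy : MemW β y) (hyle : ∀ i, |y i| ≤ 1) :
    (∑' i, α i * T y i) = ϑ * ∑' i, β i * y i := by
  set L := ∑' i, α i * T y i with hLdef
  set t := ∑' i, β i * y i with htdef
  have hTy : Tendsto (T y) atTop (𝓝 L) := (hT1 y hy).1.2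
  have hyt : Tendsto y atTop (𝓝 t) := hy.2
  by_contra hne
  set d := |L - ϑ * t| with hddef
  have hd : 0 < d := by
    rw [hddef]
    apply abs_pos.2
    intro h
    apply hne
    have : L = ϑ * t := by linarith [sub_eq_zero.1 h]
    exact this
  obtain ⟨M₀, hM₀⟩ := (Metric.tendsto_atTop.1 hTy) (d/4) (by linarith)
  obtain ⟨J₁, hJ₁⟩ := (Metric.tendsto_atTop.1 he) (d/4) (by linarith)
  obtain ⟨I₂, hI₂⟩ := (Metric.tendsto_atTop.1 hyt) (d/4) (by linarith)
  obtain ⟨J₂, hJ₂⟩ := eventually_atTop.1 (Filter.tendsto_atTop.1 hn I₂)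
  obtain ⟨j, hjJ, hjm⟩ := hm M₀ (max J₁ J₂)
  have hj1 : J₁ ≤ j := le_trans (le_max_left _ _) hjJ
  have hj2 : J₂ ≤ j := le_trans (le_max_right _ _) hjJ
  have hA : |T y (m j) - L| < d/4 := by
    have := hM₀ (m j) hjm
    rwa [Real.dist_eq] at this
  have hB : |T y (m j) - ϑ * y (n j)| ≤ e j := hcert j y hy hyle
  have hBe : e j < d/4 := by
    have := hJ₁ j hj1
    rw [Real.dist_eq, sub_zero] at this
    exact lt_of_le_of_lt (le_abs_self _) this
  have hC : |y (n j) - t| < d/4 := by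
    have := hI₂ (n j) (hJ₂ j hj2)
    rwa [Real.dist_eq] at this
  have hD : |ϑ * y (n j) - ϑ * t| ≤ d/4 := by
    have h1 : |ϑ * y (n j) - ϑ * t| = |ϑ| * |y (n j) - t| := by
      rw [← abs_mul]; ring_nf
    rw [h1]
    calc |ϑ| * |y (n j) - t| ≤ 1 * (d/4) :=
        mul_le_mul hϑ (le_of_lt hC) (abs_nonneg _) zero_le_one
      _ = d/4 := by ring
  have hmain : d ≤ 3 * (d/4) := by
    have : L - ϑ * t = -(T y (m j) - L) + (T y (m j) - ϑ * y (n j)) + (ϑ * y (n j) - ϑ * t) := by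
      ring
    calc d = |L - ϑ * t| := hddef
      _ = |(-(T y (m j) - L)) + ((T y (m j) - ϑ * y (n j)) + (ϑ * y (n j) - ϑ * t))| := by
          rw [this]; ring_nf
      _ ≤ |(-(T y (m j) - L))| + |(T y (m j) - ϑ * y (n j)) + (ϑ * y (n j) - ϑ * t)| :=
          abs_add_le _ _
      _ ≤ |(-(T y (m j) - L))| + (|T y (m j) - ϑ * y (n j)| + |ϑ * y (n j) - ϑ * t|) := by
          linarith [abs_add_le (T y (m j) - ϑ * y (n j)) (ϑ * y (n j) - ϑ * t)]
      _ = |T y (m j) - L| + |T y (m j) - ϑ * y (n j)| + |ϑ * y (n j) - ϑ * t| := by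
          rw [abs_neg]; ring
      _ ≤ 3 * (d/4) := by linarith
  linarith

private lemma exists_large' {m : ℕ → ℕ} {S : Set ℕ} (hinj : Set.InjOn m S)
    (hS : S.Infinite) (M₀ J : ℕ) :
    ∃ j ∈ S, J ≤ j ∧ M₀ ≤ m j := by
  have hfin : (S ∩ m ⁻¹' (Set.Iio M₀)).Finite := by
    apply Set.Finite.of_finite_image ?_ (hinj.mono Set.inter_subset_left)
    apply (Set.finite_Iio M₀).subset
    rintro k ⟨j, hj, rfl⟩
    exact hj.2
  have hinf : (S \ ((S ∩ m ⁻¹' (Set.Iio M₀)) ∪ Set.Iio J)).Infinite :=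
    hS.diff (hfin.union (Set.finite_Iio J))
  obtain ⟨j, hjS, hj2⟩ := hinf.nonempty
  rw [Set.mem_union, not_or] at hj2
  refine ⟨j, hjS, ?_, ?_⟩
  · have := hj2.2; simpa [Set.mem_Iio] using this
  · by_contra h
    exact hj2.1 ⟨hjS, by simpa [Set.mem_Iio] using h⟩

private lemma limit_ident2 {α β : ℕ → ℝ} {T : (ℕ → ℝ) → (ℕ → ℝ)}
    (hT1 : ∀ x, MemW β x → MemW α (T x) ∧ supNorm (T x) = supNorm x)
    {ϑ : ℝ} (hϑ : |ϑ| ≤ 1)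
    (hgood : ∀ ε' : ℝ, 0 < ε' → ∀ M₀ I₂ : ℕ, ∃ (mm nn : ℕ) (eee : ℝ),
      M₀ ≤ mm ∧ I₂ ≤ nn ∧ eee ≤ ε' ∧
      ∀ y, MemW β y → (∀ i, |y i| ≤ 1) → |T y mm - ϑ * y nn| ≤ eee)
    {y : ℕ → ℝ} (hy : MemW β y) (hyle : ∀ i, |y i| ≤ 1) :
    (∑' i, α i * T y i) = ϑ * ∑' i, β i * y i := by
  set L := ∑' i, α i * T y i with hLdef
  set t := ∑' i, β i * y i with htdef
  have hTy : Tendsto (T y) atTop (𝓝 L) := (hT1 y hy).1.2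
  have hyt : Tendsto y atTop (𝓝 t) := hy.2
  by_contra hne
  set d := |L - ϑ * t| with hddef
  have hd : 0 < d := by
    rw [hddef]
    apply abs_pos.2
    intro h
    exact hne (by linarith [sub_eq_zero.1 h])
  obtain ⟨M₀, hM₀⟩ := (Metric.tendsto_atTop.1 hTy) (d/4) (by linarith)
  obtain ⟨I₂, hI₂⟩ := (Metric.tendsto_atTop.1 hyt) (d/4) (by linarith)
  obtain ⟨mm, nn, eee, hmm, hnn, heee, hcert⟩ := hgood (d/4) (by linarith) M₀ I₂
  have hA : |T y mm - L| < d/4 := by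
    have := hM₀ mm hmm
    rwa [Real.dist_eq] at this
  have hB : |T y mm - ϑ * y nn| ≤ d/4 := le_trans (hcert y hy hyle) heee
  have hC : |y nn - t| < d/4 := by
    have := hI₂ nn hnn
    rwa [Real.dist_eq] at this
  have hD : |ϑ * y nn - ϑ * t| ≤ d/4 := by
    have h1 : |ϑ * y nn - ϑ * t| = |ϑ| * |y nn - t| := by
      rw [← abs_mul]; ring_nf
    rw [h1]
    calc |ϑ| * |y nn - t| ≤ 1 * (d/4) :=
        mul_le_mul hϑ (le_of_lt hC) (abs_nonneg _) zero_le_one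
      _ = d/4 := by ring
  have hmain : d ≤ 3 * (d/4) := by
    calc d = |L - ϑ * t| := hddef
      _ = |(-(T y mm - L)) + ((T y mm - ϑ * y nn) + (ϑ * y nn - ϑ * t))| := by
          congr 1; ring
      _ ≤ |(-(T y mm - L))| + |(T y mm - ϑ * y nn) + (ϑ * y nn - ϑ * t)| := abs_add_le _ _
      _ ≤ |(-(T y mm - L))| + (|T y mm - ϑ * y nn| + |ϑ * y nn - ϑ * t|) := by
          linarith [abs_add_le (T y mm - ϑ * y nn) (ϑ * y nn - ϑ * t)]
      _ = |T y mm - L| + |T y mm - ϑ * y nn| + |ϑ * y nn - ϑ * t| := by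
          rw [abs_neg]; ring
      _ ≤ 3 * (d/4) := by linarith
  linarith

/-- if `‖α‖₁ = 1`, `α(n) > 0` for all `n`, and `W_α` contains a subspace
isometric to `W_β` with `‖β‖₁ = 1`, then `{n | β n < 0}` is finite and
`{n | β n = 0}` is empty. -/
theorem stmt10 (α β : ℕ → ℝ)
    (hα : Summable fun i => |α i|) (hα1 : ∑' i, |α i| = 1) (hαpos : ∀ n, 0 < α n)
    (hβ : Summable fun i => |β i|) (hβ1 : ∑' i, |β i| = 1)
    (hemb : ∃ T : (ℕ → ℝ) → (ℕ → ℝ),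
      (∀ x, MemW β x → MemW α (T x) ∧ supNorm (T x) = supNorm x) ∧
      (∀ x y, MemW β x → MemW β y → T (x + y) = T x + T y) ∧
      (∀ (a : ℝ) (x : ℕ → ℝ), MemW β x → T (a • x) = a • T x)) :
    {n | β n < 0}.Finite ∧ {n | β n = 0} = ∅ := by
  obtain ⟨T, hT1, hT2, hT3⟩ := hemb
  -- β tends to zero
  have hβ0 : Tendsto (fun k => |β k|) atTop (𝓝 0) := by
    have := hβ.tendsto_atTop_zero
    have h2 : Tendsto (fun k => |(|β k|)|) atTop (𝓝 (|0|)) := this.abs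
    simpa using h2
  obtain ⟨N₀, hN₀⟩ : ∃ N₀, ∀ k, N₀ ≤ k → |β k| ≤ 1/100 := by
    obtain ⟨N₀, h⟩ := (Metric.tendsto_atTop.1 hβ0) (1/100) (by norm_num)
    refine ⟨N₀, fun k hk => ?_⟩
    have := h k hk
    rw [Real.dist_eq, sub_zero, abs_abs] at this
    linarith
  -- tail sums
  have hτ0 : ∀ M : ℕ, 0 ≤ ∑' i, |β (i + (M+1))| := fun M => tsum_nonneg fun _ => abs_nonneg _
  have hτto : Tendsto (fun M : ℕ => ∑' i, |β (i + (M+1))|) atTop (𝓝 0) := by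
    have h1 : Tendsto (fun k : ℕ => ∑' i, |β (i + k)|) atTop (𝓝 0) := by
      have := tendsto_sum_nat_add (f := fun i => |β i|)
      exact this
    have h2 : Tendsto (fun M : ℕ => M + 1) atTop atTop := tendsto_add_atTop_nat 1
    exact h1.comp h2
  -- global certificate family
  have hcertall : ∀ n : ℕ, ∃ (m : ℕ) (s : ℝ), (s = 1 ∨ s = -1) ∧
      (|β n| ≤ 1/4 → ∀ y, MemW β y → (∀ i, |y i| ≤ 1) →
        |T y m - s * y n| ≤ 4 * |β n| + 3 * (1/((n:ℝ)+100))) := by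
    intro n
    by_cases hn : |β n| ≤ 1/4
    · obtain ⟨m, s, hs, hc⟩ := certificate hβ hβ1 hT1 hT2 hT3 n hn
        (show (0:ℝ) < 1/((n:ℝ)+100) by positivity)
      exact ⟨m, s, hs, fun _ => hc⟩
    · exact ⟨0, 1, Or.inl rfl, fun h => absurd h hn⟩
  choose mc sc hsc hcc using hcertall
  have hEle : ∀ n : ℕ, (1:ℝ)/((n:ℝ)+100) ≤ 1/100 := by
    intro n
    apply div_le_div_of_nonneg_left zero_le_one (by norm_num)
    have : (0:ℝ) ≤ (n:ℝ) := Nat.cast_nonneg n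
    linarith
  have hEsmall : ∀ n : ℕ, |β n| ≤ 1/100 → 4 * |β n| + 3 * (1/((n:ℝ)+100)) ≤ 7/100 := by
    intro n hn
    have := hEle n
    linarith
  have hEto : Tendsto (fun n : ℕ => 4 * |β n| + 3 * (1/((n:ℝ)+100))) atTop (𝓝 0) := by
    have h1 : Tendsto (fun n : ℕ => 4 * |β n|) atTop (𝓝 (4 * 0)) := hβ0.const_mul 4
    have h2 : Tendsto (fun n : ℕ => ((n:ℝ)+100)) atTop atTop := by
      apply Filter.tendsto_atTop_add_const_right
      exact tendsto_natCast_atTop_atTop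
    have h3 : Tendsto (fun n : ℕ => ((n:ℝ)+100)⁻¹) atTop (𝓝 0) := h2.inv_tendsto_atTop
    have h4 : Tendsto (fun n : ℕ => 3 * (1/((n:ℝ)+100))) atTop (𝓝 (3 * 0)) := by
      simp only [one_div]
      exact h3.const_mul 3
    have h5 := h1.add h4
    have h6 : (4:ℝ) * 0 + 3 * 0 = 0 := by norm_num
    rw [h6] at h5
    exact h5
  -- injectivity of the certificate coordinates on good indices
  have hmcinj : Set.InjOn mc {n | |β n| ≤ 1/100} := by
    intro a ha b hb hab
    by_contra hne
    have ha' : |β a| ≤ 1/100 := ha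
    have hb' : |β b| ≤ 1/100 := hb
    have ha4 : |β a| ≤ 1/4 := by linarith
    have hb4 : |β b| ≤ 1/4 := by linarith
    refine cert_ne (e' := 4 * |β b| + 3 * (1/((b:ℝ)+100))) hβ hβ1 (Ne.symm hne) ha4 (hsc a) (hsc b) (hcc a ha4) ?_ ?_
    · rw [hab]; exact hcc b hb4
    · have h5 := hEsmall a ha'
      have h6 := hEsmall b hb'
      linarith
  -- sign extraction
  have hGoodInf : {n | |β n| ≤ 1/100}.Infinite := by
    apply Set.Infinite.mono (s := Set.Ici N₀) (fun k hk => hN₀ k hk) (Set.Ici_infinite N₀)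
  -- extract a sign occurring infinitely often among good indices
  have hsplit : {n | |β n| ≤ 1/100 ∧ sc n = 1}.Infinite ∨
      {n | |β n| ≤ 1/100 ∧ sc n = -1}.Infinite := by
    by_contra h
    push_neg at h
    have : {n | |β n| ≤ 1/100} ⊆
        {n | |β n| ≤ 1/100 ∧ sc n = 1} ∪ {n | |β n| ≤ 1/100 ∧ sc n = -1} := by
      intro n hn
      rcases hsc n with hs | hs
      · exact Or.inl ⟨hn, hs⟩
      · exact Or.inr ⟨hn, hs⟩
    exact hGoodInf ((h.1.union h.2).subset this)
  have hςex : ∃ ς : ℝ, (ς = 1 ∨ ς = -1) ∧ {n | |β n| ≤ 1/100 ∧ sc n = ς}.Infinite := by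
    rcases hsplit with h | h
    · exact ⟨1, Or.inl rfl, h⟩
    · exact ⟨-1, Or.inr rfl, h⟩
  obtain ⟨ς, hςu, hςinf⟩ := hςex
  have hςabs : |ς| ≤ 1 := by rcases hςu with h | h <;> simp [h]
  have hςsq : ς * ς = 1 := by rcases hςu with h | h <;> rw [h] <;> norm_num
  -- Phase 1 : the limit functional is ς·b
  have hident1 : ∀ y, MemW β y → (∀ i, |y i| ≤ 1) →
      (∑' i, α i * T y i) = ς * ∑' i, β i * y i := by
    intro y hy hyle
    refine limit_ident2 hT1 hςabs ?_ hy hyle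
    intro ε' hε' M₀ I₂
    obtain ⟨J₃, hJ₃⟩ : ∃ J₃, ∀ n, J₃ ≤ n → 4 * |β n| + 3 * (1/((n:ℝ)+100)) ≤ ε' := by
      obtain ⟨J₃, h⟩ := (Metric.tendsto_atTop.1 hEto) ε' hε'
      refine ⟨J₃, fun n hn => ?_⟩
      have := h n hn
      rw [Real.dist_eq, sub_zero] at this
      exact le_of_lt (lt_of_le_of_lt (le_abs_self _) this)
    have hsub : {n | |β n| ≤ 1/100 ∧ sc n = ς} ⊆ {n | |β n| ≤ 1/100} :=
      fun n hn => hn.1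
    obtain ⟨n, hnS, hnJ, hnm⟩ := exists_large' (hmcinj.mono hsub) hςinf M₀ (max J₃ I₂)
    refine ⟨mc n, n, 4 * |β n| + 3 * (1/((n:ℝ)+100)), hnm,
      le_trans (le_max_right _ _) hnJ, hJ₃ n (le_trans (le_max_left _ _) hnJ), ?_⟩
    have h4 : |β n| ≤ 1/4 := by have := hnS.1; linarith
    have := hcc n h4
    rw [hnS.2] at this
    exact this
  -- KEY quantitative fact
  have hKEY : ∀ (m₀ : ℕ) (δ : ℝ), 0 < δ → ∀ nbar : ℕ, ∃ (M : ℕ) (w : ℕ → ℝ),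
      MemW β w ∧ (∀ i, |w i| ≤ 1) ∧ (∀ i, i ≤ M → w i = ς * Real.sign (β i)) ∧
      nbar ≤ M ∧ 1 - δ ≤ T w m₀ ∧ 1 - δ ≤ ς * ∑' i, β i * w i := by
    intro m₀ δ hδ nbar
    have hαm : 0 < α m₀ := hαpos m₀
    set ρ := min (1/2) (min (δ * α m₀ / 2) (δ/2)) with hρdef
    have hρ0 : 0 < ρ := by
      apply lt_min (by norm_num)
      apply lt_min (by positivity) (by linarith)
    obtain ⟨M₁, hM₁⟩ := (Metric.tendsto_atTop.1 hτto) ρ hρ0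
    set M := max M₁ nbar with hMdef
    set τ := ∑' i, |β (i + (M+1))| with hτdef
    have hτρ : τ ≤ ρ := by
      have h1 := hM₁ M (le_max_left _ _)
      rw [Real.dist_eq, sub_zero] at h1
      have h2 : τ ≤ |τ| := le_abs_self _
      have h3 : |τ| < ρ := h1
      linarith
    have hτhalf : τ ≤ 1/2 := le_trans hτρ (min_le_left _ _)
    have hτa : τ ≤ δ * α m₀ / 2 := le_trans hτρ (le_trans (min_le_right _ _) (min_le_left _ _))
    have hτb : τ ≤ δ/2 := le_trans hτρ (le_trans (min_le_right _ _) (min_le_right _ _))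
    obtain ⟨y, hymem, hyle, hyM, hylb⟩ := norming hβ hβ1 M hτhalf
    set w := ς • y with hwdef
    have hwmem : MemW β w := memw_smul hβ ς hymem
    have hwle : ∀ i, |w i| ≤ 1 := by
      intro i
      rw [hwdef]
      simp only [Pi.smul_apply, smul_eq_mul, abs_mul]
      calc |ς| * |y i| ≤ 1 * 1 := mul_le_mul hςabs (hyle i) (abs_nonneg _) zero_le_one
        _ = 1 := by norm_num
    have hwM : ∀ i, i ≤ M → w i = ς * Real.sign (β i) := by
      intro i hi
      rw [hwdef]
      simp only [Pi.smul_apply, smul_eq_mul]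
      rw [hyM i hi]
    have hbw : (∑' i, β i * w i) = ς * ∑' i, β i * y i := by
      have hpt : ∀ i, β i * w i = ς * (β i * y i) := by
        intro i
        rw [hwdef]
        simp only [Pi.smul_apply, smul_eq_mul]
        ring
      rw [tsum_congr hpt, tsum_mul_left]
    have hby : 1 - δ ≤ ∑' i, β i * y i := by
      have : 1 - 2*τ ≤ ∑' i, β i * y i := hylb
      linarith
    have hΛw : (∑' i, α i * T w i) = ∑' i, β i * y i := by
      rw [hident1 w hwmem hwle, hbw, ← mul_assoc, hςsq, one_mul]
    have hclb := coord_lb hα hα1 hαpos hT1 hwmem hwle m₀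
    rw [hΛw] at hclb
    have hTw : 1 - δ ≤ T w m₀ := by
      have h5 : α m₀ * T w m₀ ≥ α m₀ - 2*τ := by linarith
      have h6 : α m₀ - 2*τ ≥ α m₀ * (1 - δ) := by nlinarith
      have h7 : α m₀ * T w m₀ ≥ α m₀ * (1 - δ) := by linarith
      exact le_of_mul_le_mul_left h7 hαm
    refine ⟨M, w, hwmem, hwle, hwM, le_max_right _ _, hTw, ?_⟩
    rw [hbw, ← mul_assoc, hςsq, one_mul]
    exact hby
  -- Part (ii) : no zero coordinates
  have hzero : ∀ n, β n ≠ 0 := by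
    intro n hn0
    have h14 : |β n| ≤ 1/4 := by rw [hn0]; norm_num
    obtain ⟨M, w, hwmem, hwle, hwM, hnM, hTw, -⟩ := hKEY (mc n) (1/2) (by norm_num) n
    have hc := hcc n h14 w hwmem hwle
    have hwn : w n = 0 := by rw [hwM n hnM, hn0, Real.sign_zero, mul_zero]
    rw [hwn, mul_zero, sub_zero] at hc
    have h15 : 4 * |β n| + 3 * (1/((n:ℝ)+100)) ≤ 3/100 := by
      rw [hn0, abs_zero]
      linarith [hEle n]
    have h16 : T w (mc n) ≤ |T w (mc n)| := le_abs_self _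
    linarith
  -- the certificate signs agree with ς·sign β on good indices
  have hsgn : ∀ n, |β n| ≤ 1/100 → sc n = ς * Real.sign (β n) := by
    intro n hn
    have h4 : |β n| ≤ 1/4 := by linarith
    obtain ⟨M, w, hwmem, hwle, hwM, hnM, hTw, -⟩ := hKEY (mc n) (1/10) (by norm_num) n
    have hc := hcc n h4 w hwmem hwle
    rw [hwM n hnM] at hc
    have hE := hEsmall n hn
    have h6 : T w (mc n) - (7:ℝ)/100 ≤ sc n * (ς * Real.sign (β n)) := by
      have h7 := abs_le.1 (le_trans hc hE)
      linarith [h7.2]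
    have hprod : 0 < sc n * (ς * Real.sign (β n)) := by linarith
    have hσ : Real.sign (β n) = 1 ∨ Real.sign (β n) = -1 := by
      rcases lt_trichotomy (β n) 0 with h | h | h
      · right; exact Real.sign_of_neg h
      · exact absurd h (hzero n)
      · left; exact Real.sign_of_pos h
    rcases hsc n with h1 | h1 <;> rcases hςu with h2 | h2 <;> rcases hσ with h3 | h3 <;>
        rw [h1, h2, h3] <;> rw [h1, h2, h3] at hprod <;>
        [norm_num; (norm_num at hprod); (norm_num at hprod); norm_num;
         (norm_num at hprod); norm_num; norm_num; (norm_num at hprod)]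
  -- Part (i) : finitely many negative coordinates
  have hfin : {n | β n < 0}.Finite := by
    by_contra hinf'
    have hinf : {n | β n < 0}.Infinite := hinf'
    have hSneginf : ({n | β n < 0} \ Set.Iio N₀).Infinite := hinf.diff (Set.finite_Iio N₀)
    have hsubg : ({n | β n < 0} \ Set.Iio N₀) ⊆ {n | |β n| ≤ 1/100} := by
      rintro n ⟨hn1, hn2⟩
      exact hN₀ n (by simpa [Set.mem_Iio] using hn2)
    have hident2 : ∀ y, MemW β y → (∀ i, |y i| ≤ 1) →
        (∑' i, α i * T y i) = (-ς) * ∑' i, β i * y i := by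
      intro y hy hyle
      refine limit_ident2 hT1 (by rw [abs_neg]; exact hςabs) ?_ hy hyle
      intro ε' hε' M₀ I₂
      obtain ⟨J₃, hJ₃⟩ : ∃ J₃, ∀ n, J₃ ≤ n → 4 * |β n| + 3 * (1/((n:ℝ)+100)) ≤ ε' := by
        obtain ⟨J₃, h⟩ := (Metric.tendsto_atTop.1 hEto) ε' hε'
        refine ⟨J₃, fun n hn => ?_⟩
        have := h n hn
        rw [Real.dist_eq, sub_zero] at this
        exact le_of_lt (lt_of_le_of_lt (le_abs_self _) this)
      obtain ⟨n, hnS, hnJ, hnm⟩ := exists_large' (hmcinj.mono hsubg) hSneginf M₀ (max J₃ I₂)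
      refine ⟨mc n, n, 4 * |β n| + 3 * (1/((n:ℝ)+100)), hnm,
        le_trans (le_max_right _ _) hnJ, hJ₃ n (le_trans (le_max_left _ _) hnJ), ?_⟩
      have hg : |β n| ≤ 1/100 := hsubg hnS
      have h4 : |β n| ≤ 1/4 := by linarith
      have hc := hcc n h4
      have hsneg : sc n = -ς := by
        rw [hsgn n hg, Real.sign_of_neg hnS.1]
        ring
      rw [hsneg] at hc
      exact hc
    obtain ⟨M, w, hwmem, hwle, -, -, -, hbw⟩ := hKEY 0 (1/2) (by norm_num) 0
    have hi1 := hident1 w hwmem hwle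
    have hi2 := hident2 w hwmem hwle
    have hz : ς * (∑' i, β i * w i) = 0 := by
      have : ς * (∑' i, β i * w i) = (-ς) * ∑' i, β i * w i := by rw [← hi1, hi2]
      linarith
    rw [hz] at hbw
    linarith
  exact ⟨hfin, Set.eq_empty_iff_forall_notMem.2 (fun n hn => hzero n hn)⟩
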